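/- Assume additionally w_1 divides w_n, and consider the one-parameter family F_a(x_1,…,x_n) = Σ_{i=1}^n x_i^{d/w_i} + a·x_1^{(d−w_n)/w_1} x_n. (i) For a ∈ ℂ there exists x ∈ ℂ^n, x ≠ 0, at which all partial derivatives of F_a vanish if and only if a^{d/w_n} · w_n · (d−w_n)^{d/w_n − 1} + (−1)^{d/w_n − 1} · d^{d/w_n} = 0. (ii) If a satisfies this equation, then there is exactly one point x ∈ ℂ^n with x_1 = 1 at which all partial derivatives of F_a vanish, and the quotient ℂ[x_2,…,x_n]/⟨G, ∂G/∂x_2, …, ∂G/∂x_n⟩, where G(x_2,…,x_n) = F_a(1,x_2,…,x_n), is a finite-dimensional ℂ-vector space of dimension ∏_{i=2}^{n−1} (d/w_i − 1). -/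

import Mathlib

open MvPolynomial

set_option maxHeartbeats 1000000
set_option synthInstance.maxHeartbeats 100000



theorem aux_quot : ∀ (n : ℕ) (a : Fin n → ℕ) (_ : ∀ j, 1 ≤ a j) (r : Fin n → ℂ),
    FiniteDimensional ℂ (MvPolynomial (Fin n) ℂ ⧸
      Ideal.span (Set.range fun j => (X j - C (r j)) ^ (a j))) ∧
    Module.finrank ℂ (MvPolynomial (Fin n) ℂ ⧸
      Ideal.span (Set.range fun j => (X j - C (r j)) ^ (a j))) = ∏ j, a j := by
  intro n
  induction n with
  | zero =>
    intro a ha r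
    have hker : Ideal.span (Set.range fun j : Fin 0 => (X j - C (r j)) ^ (a j)) =
        RingHom.ker (MvPolynomial.isEmptyAlgEquiv ℂ (Fin 0)).toAlgHom := by
      rw [Set.range_eq_empty, Ideal.span_empty]
      exact ((RingHom.injective_iff_ker_eq_bot _).1
        (MvPolynomial.isEmptyAlgEquiv ℂ (Fin 0)).injective).symm
    have eqv : (MvPolynomial (Fin 0) ℂ ⧸
        Ideal.span (Set.range fun j : Fin 0 => (X j - C (r j)) ^ (a j))) ≃ₐ[ℂ] ℂ :=
      (Ideal.quotientEquivAlgOfEq ℂ hker).trans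
        (Ideal.quotientKerAlgEquivOfSurjective
          (MvPolynomial.isEmptyAlgEquiv ℂ (Fin 0)).surjective)
    constructor
    · exact Module.Finite.equiv eqv.toLinearEquiv.symm
    · rw [eqv.toLinearEquiv.finrank_eq]
      simp
  | succ n IH =>
    intro a ha r
    set S := MvPolynomial (Fin n) ℂ with hS
    set e := MvPolynomial.finSuccEquiv ℂ n with he
    set I : Ideal (MvPolynomial (Fin (n + 1)) ℂ) :=
      Ideal.span (Set.range fun j => (X j - C (r j)) ^ (a j)) with hI
    set I₀ : Ideal S :=
      Ideal.span (Set.range fun j : Fin n => (X j - C (r j.succ)) ^ (a j.succ)) with hI₀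
    set f : Polynomial S := (Polynomial.X - Polynomial.C (C (r 0))) ^ (a 0) with hf
    have hC : ∀ c : ℂ, e (C c) = Polynomial.C (C c) := fun c => by
      rw [he, finSuccEquiv_apply]; simp
    -- image of I
    have hmap : I.map (e : MvPolynomial (Fin (n + 1)) ℂ →+* Polynomial S)
        = I₀.map Polynomial.C ⊔ Ideal.span {f} := by
      have h1 : (e : MvPolynomial (Fin (n + 1)) ℂ →+* Polynomial S)
          ((X (0 : Fin (n+1)) - C (r 0)) ^ a 0) = f := by
        show e ((X (0 : Fin (n+1)) - C (r 0)) ^ a 0) = f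
        rw [map_pow, map_sub, finSuccEquiv_X_zero, hC]
      have h2 : ((e : MvPolynomial (Fin (n + 1)) ℂ →+* Polynomial S) ∘
            Fin.tail (fun j : Fin (n+1) => (X j - C (r j)) ^ (a j)))
          = ⇑(Polynomial.C : S →+* Polynomial S) ∘
              (fun j : Fin n => (X j - C (r j.succ)) ^ (a j.succ)) := by
        funext j
        show e ((X j.succ - C (r j.succ)) ^ a j.succ) = _
        simp only [Function.comp_apply]
        rw [map_pow, map_sub, finSuccEquiv_X_succ, hC, ← map_sub, ← map_pow]
      rw [hI, Fin.range_fin_succ, Ideal.span_insert, Ideal.map_sup, sup_comm]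
      congr 1
      · rw [Ideal.map_span, hI₀, Ideal.map_span, ← Set.range_comp, h2, Set.range_comp]
      · rw [Ideal.map_span, Set.image_singleton, h1]
    -- chain of algebra equivalences
    have e1 : (MvPolynomial (Fin (n + 1)) ℂ ⧸ I) ≃ₐ[ℂ]
        (Polynomial S ⧸ (I₀.map Polynomial.C ⊔ Ideal.span {f})) :=
      Ideal.quotientEquivAlg I _ e hmap.symm
    haveI : ∀ J : Ideal (Polynomial S ⧸ I₀.map Polynomial.C), J.IsTwoSided :=
      fun J => ⟨fun b ha => mul_comm b _ ▸ J.smul_mem _ ha⟩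
    have e2 : (Polynomial S ⧸ (I₀.map Polynomial.C ⊔ Ideal.span {f})) ≃ₐ[ℂ]
        ((Polynomial S ⧸ I₀.map Polynomial.C) ⧸
          (Ideal.span {f}).map (Ideal.Quotient.mkₐ ℂ (I₀.map Polynomial.C))) :=
      (DoubleQuot.quotQuotEquivQuotSupₐ ℂ _ _).symm
    have hspan : (Ideal.span {f}).map (Ideal.Quotient.mkₐ ℂ (I₀.map Polynomial.C)) =
        Ideal.span {Ideal.Quotient.mk (I₀.map Polynomial.C) f} := by
      rw [Ideal.map_span (Ideal.Quotient.mkₐ ℂ (I₀.map Polynomial.C)) ({f} : Set (Polynomial S)),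
        Set.image_singleton, Ideal.Quotient.mkₐ_eq_mk]
    have e3 : ((Polynomial S ⧸ I₀.map Polynomial.C) ⧸
          (Ideal.span {f}).map (Ideal.Quotient.mkₐ ℂ (I₀.map Polynomial.C))) ≃ₐ[ℂ]
        ((Polynomial S ⧸ I₀.map Polynomial.C) ⧸
          Ideal.span {Ideal.Quotient.mk (I₀.map Polynomial.C) f}) :=
      Ideal.quotientEquivAlgOfEq ℂ hspan
    set fbar : Polynomial (S ⧸ I₀) := f.map (Ideal.Quotient.mk I₀) with hfbar
    haveI : ∀ J : Ideal (Polynomial (S ⧸ I₀)), J.IsTwoSided :=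
      fun J => ⟨fun b ha => mul_comm b _ ▸ J.smul_mem _ ha⟩
    have hcomm : ∀ c : ℂ, (AdjoinRoot.Polynomial.quotQuotEquivComm I₀ f) (algebraMap ℂ _ c)
        = algebraMap ℂ _ c := by
      intro c
      have h0 : (algebraMap ℂ (Polynomial (S ⧸ I₀) ⧸ Ideal.span {fbar}) c) =
          Ideal.Quotient.mk _ ((Polynomial.C (C c)).map (Ideal.Quotient.mk I₀)) := by
        rw [Polynomial.map_C]; rfl
      rw [h0, AdjoinRoot.Polynomial.quotQuotEquivComm_mk]
      rfl
    have e4 : ((Polynomial S ⧸ I₀.map Polynomial.C) ⧸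
          Ideal.span {Ideal.Quotient.mk (I₀.map Polynomial.C) f}) ≃ₐ[ℂ]
        AdjoinRoot fbar :=
      (AlgEquiv.ofRingEquiv (f := AdjoinRoot.Polynomial.quotQuotEquivComm I₀ f) hcomm).symm
    have eqv : (MvPolynomial (Fin (n + 1)) ℂ ⧸ I) ≃ₐ[ℂ] AdjoinRoot fbar :=
      ((e1.trans e2).trans e3).trans e4
    -- properties of fbar
    obtain ⟨ihFD, ihrank⟩ := IH (fun j => a j.succ) (fun j => ha j.succ) (fun j => r j.succ)
    have hne : I₀ ≠ ⊤ := by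
      intro htop
      have hle : I₀ ≤ RingHom.ker (aeval (R := ℂ) fun i : Fin n => r i.succ) := by
        rw [hI₀, Ideal.span_le]
        rintro _ ⟨j, rfl⟩
        have hz : a j.succ ≠ 0 := Nat.one_le_iff_ne_zero.mp (ha j.succ)
        rw [SetLike.mem_coe, RingHom.mem_ker, map_pow, map_sub, aeval_X, aeval_C, Algebra.algebraMap_self_apply, sub_self,
          zero_pow hz]
      rw [htop] at hle
      have : (1 : ℂ) = 0 := by
        have := hle (Submodule.mem_top (x := (1 : S)))
        simpa using this
      exact one_ne_zero this
    have : Nontrivial (S ⧸ I₀) := Ideal.Quotient.nontrivial_iff.mpr hne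
    have hmonic : fbar.Monic := by
      rw [hfbar, hf]
      exact ((Polynomial.monic_X_sub_C _).pow _).map _
    have hdeg : fbar.natDegree = a 0 := by
      rw [hfbar, hf, Polynomial.map_pow, Polynomial.map_sub, Polynomial.map_X,
        Polynomial.map_C, Polynomial.Monic.natDegree_pow (Polynomial.monic_X_sub_C _),
        Polynomial.natDegree_X_sub_C, mul_one]
    set pb := AdjoinRoot.powerBasis' hmonic with hpb
    have hfree : Module.Free (S ⧸ I₀) (AdjoinRoot fbar) := Module.Free.of_basis pb.basis
    have hfin : Module.Finite (S ⧸ I₀) (AdjoinRoot fbar) := Module.Finite.of_basis pb.basis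
    have hrankB : Module.finrank (S ⧸ I₀) (AdjoinRoot fbar) = a 0 := by
      rw [Module.finrank_eq_card_basis pb.basis]
      simp [hpb, hdeg]
    haveI htower : IsScalarTower ℂ (S ⧸ I₀) (AdjoinRoot fbar) :=
      IsScalarTower.of_algebraMap_eq' (R := ℂ) (S := S ⧸ I₀) (A := AdjoinRoot fbar) rfl
    have hFD : FiniteDimensional ℂ (AdjoinRoot fbar) :=
      Module.Finite.trans (S ⧸ I₀) (AdjoinRoot fbar)
    have hrank : Module.finrank ℂ (AdjoinRoot fbar) = ∏ j, a j := by
      rw [← Module.finrank_mul_finrank ℂ (S ⧸ I₀) (AdjoinRoot fbar), ihrank, hrankB,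
        Fin.prod_univ_succ, mul_comm]
    constructor
    · exact Module.Finite.equiv eqv.toLinearEquiv.symm
    · rw [eqv.toLinearEquiv.finrank_eq, hrank]

/- Statement 5: the family F_a = Σ x_i^{d/w_i} + a·x_1^{(d−w_n)/w_1}·x_n
(here n = m+2, assuming w_1 ∣ w_n):
(i) the discriminant is a^{d/w_n}·w_n·(d−w_n)^{d/w_n−1} + (−1)^{d/w_n−1}·d^{d/w_n} = 0;
(ii) on the discriminant there is exactly one critical point with x_1 = 1, and the
Tjurina algebra of G = F_a(1,x_2,…,x_n) has dimension ∏_{i=2}^{n−1}(d/w_i − 1). -/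

noncomputable def Flast {m : ℕ} (d : ℕ) (w : Fin (m + 2) → ℕ) (a : ℂ)
    (x : Fin (m + 2) → ℂ) : ℂ :=
  (∑ i, x i ^ (d / w i)) +
    a * x 0 ^ ((d - w (Fin.last (m + 1))) / w 0) * x (Fin.last (m + 1))




section derivs

variable {m : ℕ} (d : ℕ) (w : Fin (m + 2) → ℕ) (a : ℂ) (x : Fin (m + 2) → ℂ)

lemma hsum_deriv (i : Fin (m + 2)) :
    HasDerivAt (fun t : ℂ => ∑ j, (Function.update x i t j) ^ (d / w j))
      ((d / w i : ℕ) * x i ^ (d / w i - 1)) (x i) := by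
  have h : ∀ j : Fin (m + 2), HasDerivAt
      (fun t : ℂ => (Function.update x i t j) ^ (d / w j))
      (if j = i then (d / w j : ℕ) * x i ^ (d / w j - 1) else 0) (x i) := by
    intro j
    by_cases hji : j = i
    · subst hji
      simpa [Function.update_self] using hasDerivAt_pow (d / w j) (x j)
    · simpa [Function.update_apply, hji] using
        hasDerivAt_const (x i) ((x j) ^ (d / w j))
  have := HasDerivAt.fun_sum (fun j (_ : j ∈ Finset.univ) => h j)
  simpa [Finset.sum_ite_eq' Finset.univ] using this

lemma last_ne_zero' : (Fin.last (m + 1) : Fin (m + 2)) ≠ 0 := by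
  simp [Fin.ext_iff]

lemma deriv_mid (i : Fin (m + 2)) (h0 : i ≠ 0) (hL : i ≠ Fin.last (m + 1)) :
    deriv (fun t : ℂ => Flast d w a (Function.update x i t)) (x i) =
      (d / w i : ℕ) * x i ^ (d / w i - 1) := by
  have h2 : HasDerivAt (fun t : ℂ =>
      a * (Function.update x i t 0) ^ ((d - w (Fin.last (m + 1))) / w 0) *
        (Function.update x i t (Fin.last (m + 1)))) 0 (x i) := by
    have : (fun t : ℂ =>
        a * (Function.update x i t 0) ^ ((d - w (Fin.last (m + 1))) / w 0) *
          (Function.update x i t (Fin.last (m + 1)))) =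
        fun _ : ℂ => a * (x 0) ^ ((d - w (Fin.last (m + 1))) / w 0) *
          (x (Fin.last (m + 1))) := by
      funext t
      rw [Function.update_of_ne (Ne.symm h0), Function.update_of_ne (Ne.symm hL)]
    rw [this]
    exact hasDerivAt_const _ _
  have := (hsum_deriv d w x i).add h2
  rw [add_zero] at this
  exact this.deriv

lemma deriv_zero' :
    deriv (fun t : ℂ => Flast d w a (Function.update x 0 t)) (x 0) =
      (d / w 0 : ℕ) * x 0 ^ (d / w 0 - 1) +
        a * ((d - w (Fin.last (m + 1))) / w 0 : ℕ) *
          x 0 ^ ((d - w (Fin.last (m + 1))) / w 0 - 1) * x (Fin.last (m + 1)) := by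
  set ee := (d - w (Fin.last (m + 1))) / w 0 with hee
  have h2 : HasDerivAt (fun t : ℂ =>
      a * (Function.update x 0 t 0) ^ ee * (Function.update x 0 t (Fin.last (m + 1))))
      (a * (ee : ℕ) * x 0 ^ (ee - 1) * x (Fin.last (m + 1))) (x 0) := by
    have heq : (fun t : ℂ =>
        a * (Function.update x 0 t 0) ^ ee * (Function.update x 0 t (Fin.last (m + 1)))) =
        fun t : ℂ => a * t ^ ee * x (Fin.last (m + 1)) := by
      funext t
      rw [Function.update_self, Function.update_of_ne last_ne_zero']
    rw [heq]
    have := ((hasDerivAt_pow ee (x 0)).const_mul a).mul_const (x (Fin.last (m + 1)))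
    refine this.congr_deriv ?_
    ring
  exact ((hsum_deriv d w x 0).add h2).deriv

lemma deriv_last' :
    deriv (fun t : ℂ => Flast d w a (Function.update x (Fin.last (m + 1)) t))
        (x (Fin.last (m + 1))) =
      (d / w (Fin.last (m + 1)) : ℕ) *
          x (Fin.last (m + 1)) ^ (d / w (Fin.last (m + 1)) - 1) +
        a * x 0 ^ ((d - w (Fin.last (m + 1))) / w 0) := by
  set ee := (d - w (Fin.last (m + 1))) / w 0 with hee
  have h2 : HasDerivAt (fun t : ℂ =>
      a * (Function.update x (Fin.last (m + 1)) t 0) ^ ee *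
        (Function.update x (Fin.last (m + 1)) t (Fin.last (m + 1))))
      (a * x 0 ^ ee) (x (Fin.last (m + 1))) := by
    have heq : (fun t : ℂ =>
        a * (Function.update x (Fin.last (m + 1)) t 0) ^ ee *
          (Function.update x (Fin.last (m + 1)) t (Fin.last (m + 1)))) =
        fun t : ℂ => a * x 0 ^ ee * t := by
      funext t
      rw [Function.update_of_ne (Ne.symm last_ne_zero'), Function.update_self]
    rw [heq]
    have := (hasDerivAt_id (x (Fin.last (m + 1)))).const_mul (a * x 0 ^ ee)
    simpa using this
  exact ((hsum_deriv d w x (Fin.last (m + 1))).add h2).deriv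

end derivs

lemma w_lt_d {m : ℕ} (w : Fin (m + 2) → ℕ) (hw : ∀ i, 0 < w i) (d : ℕ)
    (hd : d = ∑ i, w i) (i : Fin (m + 2)) : w i < d := by
  have h0L : (0 : Fin (m + 2)) ≠ Fin.last (m + 1) := by simp [Fin.ext_iff]
  set j : Fin (m + 2) := if i = 0 then Fin.last (m + 1) else 0 with hj
  have hij : i ≠ j := by
    by_cases h : i = 0
    · rw [hj, if_pos h, h]; exact h0L
    · rw [hj, if_neg h]; exact h
  have hsub : ({i, j} : Finset (Fin (m + 2))).sum w ≤ Finset.univ.sum w :=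
    Finset.sum_le_sum_of_subset (Finset.subset_univ _)
  rw [Finset.sum_pair hij] at hsub
  have h2 : w i + w j ≤ d := by rw [hd]; exact hsub
  have := hw j
  omega

lemma two_le_div {d wi : ℕ} (hwi : 0 < wi) (hdvd : wi ∣ d) (hlt : wi < d) :
    2 ≤ d / wi := by
  rcases hdvd with ⟨c, hc⟩
  have hc2 : 2 ≤ c := by
    rcases Nat.lt_or_ge c 2 with h | h
    · interval_cases c <;> omega
    · exact h
  rw [hc, Nat.mul_div_cancel_left _ hwi]
  exact hc2


lemma alg_fwd (k k0 e s : ℕ) (hk1 : k - 1 + 1 = k) (hs : s * (k - 1) = e)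
    (hk0e : k0 - 1 = (e - 1) + s)
    (K K0 E : ℂ) (a x0 xL : ℂ) (hx0 : x0 ≠ 0)
    (hEL : K * xL ^ (k - 1) + a * x0 ^ e = 0)
    (hE0 : K0 * x0 ^ (k0 - 1) + a * E * x0 ^ (e - 1) * xL = 0) :
    a ^ k * E ^ (k - 1) + (-1 : ℂ) ^ (k - 1) * (K * K0 ^ (k - 1)) = 0 := by
  have hsplit : x0 ^ (k0 - 1) = x0 ^ (e - 1) * x0 ^ s := by rw [← pow_add, ← hk0e]
  have hB : K0 * x0 ^ s + a * E * xL = 0 := by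
    rw [hsplit] at hE0
    have h2 : x0 ^ (e - 1) * (K0 * x0 ^ s + a * E * xL) = 0 := by linear_combination hE0
    rcases mul_eq_zero.1 h2 with h3 | h3
    · exact absurd h3 (pow_ne_zero _ hx0)
    · exact h3
  have hB' : a * E * xL = -(K0 * x0 ^ s) := by linear_combination hB
  have h1 : a ^ (k-1) * E ^ (k-1) * xL ^ (k-1) = (-1 : ℂ) ^ (k-1) * (K0 ^ (k-1) * x0 ^ e) := by
    calc a ^ (k-1) * E ^ (k-1) * xL ^ (k-1) = (a * E * xL) ^ (k-1) := by
          rw [mul_pow, mul_pow]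
      _ = (-(K0 * x0 ^ s)) ^ (k-1) := by rw [hB']
      _ = (-1 : ℂ) ^ (k-1) * (K0 ^ (k-1) * (x0 ^ s) ^ (k-1)) := by
          rw [neg_eq_neg_one_mul, mul_pow, mul_pow]
      _ = (-1 : ℂ) ^ (k-1) * (K0 ^ (k-1) * x0 ^ e) := by rw [← pow_mul, hs]
  have hEL' : K * xL ^ (k-1) = -(a * x0 ^ e) := by linear_combination hEL
  have h2 : a ^ (k-1) * E ^ (k-1) * (K * xL ^ (k-1)) =
      (-1 : ℂ) ^ (k-1) * (K0 ^ (k-1) * x0 ^ e) * K := by linear_combination K * h1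
  rw [hEL'] at h2
  have hak : a ^ k = a ^ (k-1) * a := by rw [← pow_succ, hk1]
  have h3 : x0 ^ e * (a ^ k * E ^ (k-1) + (-1 : ℂ) ^ (k-1) * (K * K0 ^ (k-1))) = 0 := by
    rw [hak]; linear_combination -h2
  rcases mul_eq_zero.1 h3 with h4 | h4
  · exact absurd h4 (pow_ne_zero _ hx0)
  · exact h4

lemma disc_translate (k : ℕ) (hk1 : k - 1 + 1 = k) (a E K K0 WL W0 DD DmL : ℂ)
    (h1 : DmL = E * W0) (h2 : DD = K * WL) (h3 : DD = K0 * W0)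
    (hfinal : a ^ k * E ^ (k-1) + (-1 : ℂ) ^ (k-1) * (K * K0 ^ (k-1)) = 0) :
    a ^ k * WL * DmL ^ (k-1) + (-1 : ℂ) ^ (k-1) * DD ^ k = 0 := by
  have hDDk : DD ^ k = (K0 * W0) ^ (k-1) * (K * WL) := by
    calc DD ^ k = DD ^ (k-1) * DD := by rw [← pow_succ, hk1]
      _ = (K0 * W0) ^ (k-1) * (K * WL) := by rw [← h3, ← h2]
  rw [hDDk, h1, mul_pow, mul_pow]
  linear_combination (WL * W0 ^ (k-1)) * hfinal

/-- Main analytic lemma: part (i) and the unique-critical-point part of (ii). -/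
lemma crit_main {m : ℕ} (w : Fin (m + 2) → ℕ) (hw : ∀ i, 0 < w i)
    (d : ℕ) (hd : d = ∑ i, w i) (hdvd : ∀ i, w i ∣ d)
    (hwn : w 0 ∣ w (Fin.last (m + 1))) (a : ℂ) :
    ((∃ x : Fin (m + 2) → ℂ, x ≠ 0 ∧ ∀ i : Fin (m + 2),
        deriv (fun t : ℂ => Flast d w a (Function.update x i t)) (x i) = 0) ↔
      a ^ (d / w (Fin.last (m + 1))) * (w (Fin.last (m + 1)) : ℂ) *
          ((d - w (Fin.last (m + 1)) : ℕ) : ℂ) ^ (d / w (Fin.last (m + 1)) - 1) +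
        (-1 : ℂ) ^ (d / w (Fin.last (m + 1)) - 1) *
          (d : ℂ) ^ (d / w (Fin.last (m + 1))) = 0) ∧
    (a ^ (d / w (Fin.last (m + 1))) * (w (Fin.last (m + 1)) : ℂ) *
          ((d - w (Fin.last (m + 1)) : ℕ) : ℂ) ^ (d / w (Fin.last (m + 1)) - 1) +
        (-1 : ℂ) ^ (d / w (Fin.last (m + 1)) - 1) *
          (d : ℂ) ^ (d / w (Fin.last (m + 1))) = 0 →
      (∃! x : Fin (m + 2) → ℂ, x 0 = 1 ∧ ∀ i : Fin (m + 2),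
          deriv (fun t : ℂ => Flast d w a (Function.update x i t)) (x i) = 0)) := by
  set L := Fin.last (m + 1) with hLdef
  set k := d / w L with hk
  set k0 := d / w 0 with hk0def
  set e := (d - w L) / w 0 with hedef
  set s := w L / w 0 with hsdef
  have hL0 : (L : Fin (m + 2)) ≠ 0 := last_ne_zero'
  have hw0 := hw 0
  have hwL := hw L
  have hd0 : 0 < d := lt_trans (hw 0) (w_lt_d w hw d hd 0)
  have hki : ∀ i, 2 ≤ d / w i := fun i => two_le_div (hw i) (hdvd i) (w_lt_d w hw d hd i)
  have hk2 : 2 ≤ k := hki L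
  have hk02 : 2 ≤ k0 := hki 0
  have hpair : w 0 + w L ≤ d := by
    have hsub : ({0, L} : Finset (Fin (m + 2))).sum w ≤ Finset.univ.sum w :=
      Finset.sum_le_sum_of_subset (Finset.subset_univ _)
    rw [Finset.sum_pair (Ne.symm hL0)] at hsub
    rw [hd]; exact hsub
  have hdsub : w 0 ∣ d - w L := Nat.dvd_sub (hdvd 0) hwn
  have he1 : 1 ≤ e := (Nat.one_le_div_iff hw0).2 (by omega)
  have hs1 : 1 ≤ s := (Nat.one_le_div_iff hw0).2 (Nat.le_of_dvd hwL hwn)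
  have hew0 : e * w 0 = d - w L := Nat.div_mul_cancel hdsub
  have hk0w0 : k0 * w 0 = d := Nat.div_mul_cancel (hdvd 0)
  have hkwL : k * w L = d := Nat.div_mul_cancel (hdvd L)
  have hkey : k0 * (d - w L) = d * e := by
    rw [← hew0, ← hk0w0]; ring
  have hwLk1 : w L * (k - 1) = d - w L := by
    have h1 : w L * k = d := by rw [mul_comm]; exact hkwL
    have : w L * (k - 1) = w L * k - w L := by
      rw [Nat.mul_sub, mul_one]
    omega
  have hsk : s * (k - 1) = e := by
    have h2 : (k - 1) * (w L / w 0) = (k - 1) * w L / w 0 :=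
      (Nat.mul_div_assoc (k - 1) hwn).symm
    rw [hsdef, mul_comm, h2, mul_comm (k-1) (w L), hwLk1]
  have hk0e : k0 - 1 = (e - 1) + s := by
    have hds : (d - w L) + w L = d := Nat.sub_add_cancel (le_of_lt (w_lt_d w hw d hd L))
    have h3 : (d - w L) / w 0 + w L / w 0 = ((d - w L) + w L) / w 0 := by
      rw [Nat.add_div_of_dvd_right hdsub]
    rw [hds] at h3
    omega
  -- complex casts
  have cw0 : ((w 0 : ℕ) : ℂ) ≠ 0 := Nat.cast_ne_zero.2 (by omega)
  have cwL : ((w L : ℕ) : ℂ) ≠ 0 := Nat.cast_ne_zero.2 (by omega)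
  have cd : ((d : ℕ) : ℂ) ≠ 0 := Nat.cast_ne_zero.2 (by omega)
  have ck : ((k : ℕ) : ℂ) ≠ 0 := Nat.cast_ne_zero.2 (by omega)
  have ck0 : ((k0 : ℕ) : ℂ) ≠ 0 := Nat.cast_ne_zero.2 (by omega)
  have ce : ((e : ℕ) : ℂ) ≠ 0 := Nat.cast_ne_zero.2 (by omega)
  have cdmL : ((d - w L : ℕ) : ℂ) ≠ 0 := Nat.cast_ne_zero.2 (by omega)
  have ccast1 : ((d - w L : ℕ) : ℂ) = (e : ℂ) * (w 0 : ℂ) := by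
    rw [← hew0]; push_cast; ring
  have ccast2 : ((d : ℕ) : ℂ) = (k : ℂ) * (w L : ℂ) := by
    rw [← hkwL]; push_cast; ring
  have ccast3 : ((d : ℕ) : ℂ) = (k0 : ℂ) * (w 0 : ℂ) := by
    rw [← hk0w0]; push_cast; ring
  have hk1k : k - 1 + 1 = k := by omega
  have ckey : ((k0 : ℕ) : ℂ) * ((d - w L : ℕ) : ℂ) = ((d : ℕ) : ℂ) * ((e : ℕ) : ℂ) := by
    have := congrArg (Nat.cast : ℕ → ℂ) hkey
    rwa [Nat.cast_mul, Nat.cast_mul] at this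
  have hL0' : (Fin.last (m + 1) : Fin (m + 2)) ≠ 0 := last_ne_zero'
  -- the canonical family of candidate critical points
  set xfun : ℂ → (Fin (m + 2) → ℂ) :=
    fun c i => if i = 0 then 1 else if i = Fin.last (m + 1) then c else 0 with hxfun
  have hxf0 : ∀ c, xfun c 0 = 1 := fun c => by simp [hxfun]
  have hxfL : ∀ c, xfun c (Fin.last (m + 1)) = c := fun c => by
    simp [hxfun, hL0']
  have hxfm : ∀ c (i : Fin (m + 2)), i ≠ 0 → i ≠ Fin.last (m + 1) → xfun c i = 0 :=
    fun c i h0 hL' => by simp [hxfun, h0, hL']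
  -- forward direction
  have fwd : (∃ x : Fin (m + 2) → ℂ, x ≠ 0 ∧ ∀ i : Fin (m + 2),
      deriv (fun t : ℂ => Flast d w a (Function.update x i t)) (x i) = 0) →
      a ^ k * (w L : ℂ) * ((d - w L : ℕ) : ℂ) ^ (k - 1) +
        (-1 : ℂ) ^ (k - 1) * (d : ℂ) ^ k = 0 := by
    rintro ⟨x, hxne, hcrit⟩
    have hmid : ∀ i : Fin (m + 2), i ≠ 0 → i ≠ Fin.last (m + 1) → x i = 0 := by
      intro i h0 hL'
      have h := hcrit i
      rw [deriv_mid d w a x i h0 hL'] at h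
      have hne : ((d / w i : ℕ) : ℂ) ≠ 0 := Nat.cast_ne_zero.2 (by have := hki i; omega)
      rcases mul_eq_zero.1 h with h' | h'
      · exact absurd h' hne
      · exact (pow_eq_zero_iff (by have := hki i; omega)).1 h'
    have hEL := hcrit (Fin.last (m + 1))
    rw [deriv_last' d w a x] at hEL
    have hE0 := hcrit 0
    rw [deriv_zero' d w a x] at hE0
    have hx0ne : x 0 ≠ 0 := by
      intro h0
      apply hxne
      have hxL : x (Fin.last (m + 1)) = 0 := by
        rw [h0] at hEL
        rw [zero_pow (by omega : e ≠ 0), mul_zero, add_zero] at hEL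
        rcases mul_eq_zero.1 hEL with h' | h'
        · exact absurd h' ck
        · exact (pow_eq_zero_iff (by omega : k - 1 ≠ 0)).1 h'
      funext i
      by_cases hi0 : i = 0
      · rw [hi0, h0]; rfl
      · by_cases hiL : i = Fin.last (m + 1)
        · rw [hiL, hxL]; rfl
        · rw [hmid i hi0 hiL]; rfl
    have hfinal := alg_fwd k k0 e s hk1k hsk hk0e ((k : ℕ) : ℂ) ((k0 : ℕ) : ℂ)
      ((e : ℕ) : ℂ) a (x 0) (x (Fin.last (m + 1))) hx0ne hEL hE0
    exact disc_translate k hk1k a ((e : ℕ) : ℂ) ((k : ℕ) : ℂ) ((k0 : ℕ) : ℂ)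
      ((w L : ℕ) : ℂ) ((w 0 : ℕ) : ℂ) ((d : ℕ) : ℂ) ((d - w L : ℕ) : ℂ)
      ccast1 ccast2 ccast3 hfinal
  -- backward: construction of the critical point on the discriminant
  have witness : (a ^ k * (w L : ℂ) * ((d - w L : ℕ) : ℂ) ^ (k - 1) +
        (-1 : ℂ) ^ (k - 1) * (d : ℂ) ^ k = 0) →
      ∃ c : ℂ, a ≠ 0 ∧ (((k0 : ℕ) : ℂ) + a * ((e : ℕ) : ℂ) * c = 0) ∧
        (∀ i : Fin (m + 2),
          deriv (fun t : ℂ => Flast d w a (Function.update (xfun c) i t)) ((xfun c) i) = 0) := by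
    intro hdisc
    have hane : a ≠ 0 := by
      intro h
      rw [h, zero_pow (by omega : k ≠ 0), zero_mul, zero_mul, zero_add] at hdisc
      rcases mul_eq_zero.1 hdisc with h' | h'
      · exact absurd h' (pow_ne_zero _ (neg_ne_zero.2 one_ne_zero))
      · exact absurd h' (pow_ne_zero _ cd)
    have hadm : a * ((d - w L : ℕ) : ℂ) ≠ 0 := mul_ne_zero hane cdmL
    set c : ℂ := -((d : ℕ) : ℂ) / (a * ((d - w L : ℕ) : ℂ)) with hc
    have hc0 : ((k0 : ℕ) : ℂ) + a * ((e : ℕ) : ℂ) * c = 0 := by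
      rw [hc]
      field_simp
      linear_combination ckey
    have htar : ((k : ℕ) : ℂ) * c ^ (k - 1) + a = 0 := by
      have hak : (a : ℂ) ^ k = a ^ (k - 1) * a := by rw [← pow_succ, hk1k]
      have h5 : ((w L : ℕ) : ℂ) * (((k : ℕ) : ℂ) * (-((d : ℕ) : ℂ)) ^ (k - 1) +
          a * (a * ((d - w L : ℕ) : ℂ)) ^ (k - 1)) = 0 := by
        have hdd : ((d : ℕ) : ℂ) ^ k = ((d : ℕ) : ℂ) ^ (k - 1) * (((k : ℕ) : ℂ) * ((w L : ℕ) : ℂ)) := by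
          calc ((d : ℕ) : ℂ) ^ k = ((d : ℕ) : ℂ) ^ (k - 1) * ((d : ℕ) : ℂ) := by
                rw [← pow_succ, hk1k]
            _ = ((d : ℕ) : ℂ) ^ (k - 1) * (((k : ℕ) : ℂ) * ((w L : ℕ) : ℂ)) := by rw [← ccast2]
        rw [neg_pow, mul_pow]
        rw [hdd] at hdisc
        linear_combination hdisc - ((w L : ℕ) : ℂ) * ((d - w L : ℕ) : ℂ) ^ (k - 1) * hak
      have h6 := (mul_eq_zero.1 h5).resolve_left cwL
      rw [hc, div_pow, ← mul_div_assoc]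
      rw [div_add' _ _ _ (pow_ne_zero _ hadm), div_eq_zero_iff]
      left
      rw [neg_pow, mul_pow]
      linear_combination h6
    refine ⟨c, hane, hc0, ?_⟩
    intro i
    by_cases hi0 : i = 0
    · subst hi0
      rw [deriv_zero' d w a (xfun c), hxf0 c, hxfL c, one_pow, one_pow, mul_one, mul_one]
      exact hc0
    · by_cases hiL : i = Fin.last (m + 1)
      · subst hiL
        rw [deriv_last' d w a (xfun c), hxf0 c, hxfL c, one_pow, mul_one]
        exact htar
      · rw [deriv_mid d w a (xfun c) i hi0 hiL, hxfm c i hi0 hiL,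
          zero_pow (by have := hki i; omega : d / w i - 1 ≠ 0), mul_zero]
  constructor
  · constructor
    · exact fwd
    · intro hdisc
      obtain ⟨c, hane, hc0, hcx⟩ := witness hdisc
      refine ⟨xfun c, ?_, hcx⟩
      intro h
      have : xfun c 0 = 0 := by rw [h]; rfl
      rw [hxf0 c] at this
      exact one_ne_zero this
  · intro hdisc
    obtain ⟨c, hane, hc0, hcx⟩ := witness hdisc
    refine ⟨xfun c, ⟨hxf0 c, hcx⟩, ?_⟩
    rintro y ⟨hy0, hycrit⟩
    have hymid : ∀ i : Fin (m + 2), i ≠ 0 → i ≠ Fin.last (m + 1) → y i = 0 := by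
      intro i h0 hL'
      have h := hycrit i
      rw [deriv_mid d w a y i h0 hL'] at h
      have hne : ((d / w i : ℕ) : ℂ) ≠ 0 := Nat.cast_ne_zero.2 (by have := hki i; omega)
      rcases mul_eq_zero.1 h with h' | h'
      · exact absurd h' hne
      · exact (pow_eq_zero_iff (by have := hki i; omega)).1 h'
    have hE0 := hycrit 0
    rw [deriv_zero' d w a y, hy0, one_pow, one_pow, mul_one, mul_one] at hE0
    have hyL : y (Fin.last (m + 1)) = c := by
      have hce : a * ((e : ℕ) : ℂ) ≠ 0 := mul_ne_zero hane ce
      have h1 : a * ((e : ℕ) : ℂ) * y (Fin.last (m + 1)) = a * ((e : ℕ) : ℂ) * c := by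
        linear_combination hE0 - hc0
      exact mul_left_cancel₀ hce h1
    funext i
    by_cases hi0 : i = 0
    · rw [hi0, hy0, hxf0 c]
    · by_cases hiL : i = Fin.last (m + 1)
      · rw [hiL, hyL, hxfL c]
      · rw [hymid i hi0 hiL, hxfm c i hi0 hiL]







lemma tjurina {m : ℕ} (w : Fin (m + 2) → ℕ) (hw : ∀ i, 0 < w i)
    (d : ℕ) (hd : d = ∑ i, w i) (hdvd : ∀ i, w i ∣ d) (a : ℂ)
    (G : MvPolynomial (Fin (m + 1)) ℂ)
    (hG : G = 1 + (∑ j : Fin (m + 1), X j ^ (d / w j.succ)) + C a * X (Fin.last m))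
    (J : Ideal (MvPolynomial (Fin (m + 1)) ℂ))
    (hJ : J = Ideal.span ({G} ∪ Set.range (fun j : Fin (m + 1) => pderiv j G)))
    (hdisc : a ^ (d / w (Fin.last (m + 1))) * (w (Fin.last (m + 1)) : ℂ) *
          ((d - w (Fin.last (m + 1)) : ℕ) : ℂ) ^ (d / w (Fin.last (m + 1)) - 1) +
        (-1 : ℂ) ^ (d / w (Fin.last (m + 1)) - 1) *
          (d : ℂ) ^ (d / w (Fin.last (m + 1))) = 0) :
    FiniteDimensional ℂ (MvPolynomial (Fin (m + 1)) ℂ ⧸ J) ∧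
      Module.finrank ℂ (MvPolynomial (Fin (m + 1)) ℂ ⧸ J) =
        ∏ j ∈ Finset.univ.filter (fun j : Fin (m + 1) => j ≠ Fin.last m),
          (d / w j.succ - 1) := by
  classical
  have hki : ∀ i : Fin (m + 2), 2 ≤ d / w i :=
    fun i => two_le_div (hw i) (hdvd i) (w_lt_d w hw d hd i)
  have hκ2 : ∀ j : Fin (m + 1), 2 ≤ d / w j.succ := fun j => hki j.succ
  have hd0 : 0 < d := lt_trans (hw 0) (w_lt_d w hw d hd 0)
  set k := d / w (Fin.last (m + 1)) with hkdef
  have hk2 : 2 ≤ k := hki (Fin.last (m + 1))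
  have hk1k : k - 1 + 1 = k := by omega
  have hκL : d / w ((Fin.last m).succ) = k := by rw [Fin.succ_last]
  have cwL : ((w (Fin.last (m + 1)) : ℕ) : ℂ) ≠ 0 :=
    Nat.cast_ne_zero.2 (by have := hw (Fin.last (m + 1)); omega)
  have cd : ((d : ℕ) : ℂ) ≠ 0 := Nat.cast_ne_zero.2 (by omega)
  have ck : ((k : ℕ) : ℂ) ≠ 0 := Nat.cast_ne_zero.2 (by omega)
  set K1 : ℂ := ((k - 1 : ℕ) : ℂ) with hK1def
  have cK1 : K1 ≠ 0 := Nat.cast_ne_zero.2 (by omega)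
  have hK1c : K1 = ((k : ℕ) : ℂ) - 1 := by
    rw [hK1def, Nat.cast_sub (by omega : 1 ≤ k), Nat.cast_one]
  have hane : a ≠ 0 := by
    intro h
    rw [h, zero_pow (by omega : k ≠ 0), zero_mul, zero_mul, zero_add] at hdisc
    rcases mul_eq_zero.1 hdisc with h' | h'
    · exact absurd h' (pow_ne_zero _ (neg_ne_zero.2 one_ne_zero))
    · exact absurd h' (pow_ne_zero _ cd)
  have hwLk1 : w (Fin.last (m + 1)) * (k - 1) = d - w (Fin.last (m + 1)) := by
    have h1 : w (Fin.last (m + 1)) * k = d := by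
      rw [hkdef, mul_comm]; exact Nat.div_mul_cancel (hdvd _)
    have h2 : w (Fin.last (m + 1)) * (k - 1) = w (Fin.last (m + 1)) * k -
        w (Fin.last (m + 1)) := by rw [Nat.mul_sub, mul_one]
    omega
  have hdm : ((d - w (Fin.last (m + 1)) : ℕ) : ℂ) = (w (Fin.last (m + 1)) : ℂ) * K1 := by
    rw [← hwLk1, Nat.cast_mul, hK1def]
  have ccast2 : ((d : ℕ) : ℂ) = ((k : ℕ) : ℂ) * (w (Fin.last (m + 1)) : ℂ) := by
    rw [← (Nat.div_mul_cancel (hdvd (Fin.last (m + 1))) :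
      k * w (Fin.last (m + 1)) = d)]
    push_cast; ring
  have hE : a ^ k * K1 ^ (k - 1) + (-1 : ℂ) ^ (k - 1) * ((k : ℕ) : ℂ) ^ k = 0 := by
    have hwLpow : ((w (Fin.last (m + 1)) : ℕ) : ℂ) ^ k =
        ((w (Fin.last (m + 1)) : ℕ) : ℂ) ^ (k - 1) * ((w (Fin.last (m + 1)) : ℕ) : ℂ) := by
      rw [← pow_succ, hk1k]
    have h := hdisc
    rw [hdm, ccast2, mul_pow, mul_pow] at h
    have h5 : ((w (Fin.last (m + 1)) : ℕ) : ℂ) ^ k *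
        (a ^ k * K1 ^ (k - 1) + (-1 : ℂ) ^ (k - 1) * ((k : ℕ) : ℂ) ^ k) = 0 := by
      linear_combination h + (a ^ k * K1 ^ (k - 1)) * hwLpow
    exact (mul_eq_zero.1 h5).resolve_left (pow_ne_zero _ cwL)
  set t0 : ℂ := -((k : ℕ) : ℂ) / (a * K1) with ht0def
  have haK1 : a * K1 ≠ 0 := mul_ne_zero hane cK1
  have ht1 : ((k : ℕ) : ℂ) * t0 ^ (k - 1) + a = 0 := by
    have hkk : ((k : ℕ) : ℂ) ^ k = ((k : ℕ) : ℂ) * ((k : ℕ) : ℂ) ^ (k - 1) := by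
      rw [← pow_succ', hk1k]
    have hak : a ^ k = a * a ^ (k - 1) := by rw [← pow_succ', hk1k]
    rw [ht0def, div_pow, ← mul_div_assoc, div_add' _ _ _ (pow_ne_zero _ haK1),
      div_eq_zero_iff]
    left
    rw [neg_pow, mul_pow]
    linear_combination hE - (-1 : ℂ) ^ (k - 1) * hkk - K1 ^ (k - 1) * hak
  have ht0k1 : t0 ^ (k - 1) = -a / ((k : ℕ) : ℂ) := by
    field_simp
    linear_combination ht1
  have ht2 : 1 + t0 ^ k + a * t0 = 0 := by
    have ht0k : t0 ^ k = t0 * t0 ^ (k - 1) := by rw [← pow_succ', hk1k]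
    rw [ht0k, ht0k1, ht0def]
    field_simp
    linear_combination hK1c
  have hpd : ∀ i : Fin (m + 1), pderiv i G =
      C ((d / w i.succ : ℕ) : ℂ) * X i ^ (d / w i.succ - 1) +
        (if i = Fin.last m then C a else 0) := by
    intro i
    rw [hG]
    simp only [map_add, pderiv_pow, pderiv_X, Pi.single_apply, map_one, pderiv_one,
      map_sum, pderiv_C_mul, mul_ite, mul_one, mul_zero, zero_add,
      Finset.sum_ite_eq' Finset.univ, Finset.mem_univ, if_true, map_natCast]
    congr 1
    by_cases h : i = Fin.last m
    · simp [h]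
    · simp [h, Ne.symm h]
  -- the "nice" ideal
  set gen : Fin (m + 1) → MvPolynomial (Fin (m + 1)) ℂ :=
    fun j => (X j - C (if j = Fin.last m then t0 else 0)) ^
      (if j = Fin.last m then 1 else d / w j.succ - 1) with hgendef
  set JJ := Ideal.span (Set.range gen) with hJJdef
  have hgen_m : ∀ j : Fin (m + 1), j ≠ Fin.last m →
      gen j = X j ^ (d / w j.succ - 1) := by
    intro j hj; rw [hgendef]; simp [hj]
  have hgen_L : gen (Fin.last m) = X (Fin.last m) - C t0 := by
    rw [hgendef]; simp
  have hXmem : ∀ j : Fin (m + 1), j ≠ Fin.last m →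
      (X j : MvPolynomial (Fin (m + 1)) ℂ) ^ (d / w j.succ - 1) ∈ JJ := fun j hj => by
    rw [← hgen_m j hj]; exact Ideal.subset_span ⟨j, rfl⟩
  have hXLmem : (X (Fin.last m) : MvPolynomial (Fin (m + 1)) ℂ) - C t0 ∈ JJ := by
    rw [← hgen_L]; exact Ideal.subset_span ⟨Fin.last m, rfl⟩
  -- J ≤ JJ
  have hGin : G ∈ JJ := by
    obtain ⟨q, hq⟩ := sub_dvd_pow_sub_pow
      (X (Fin.last m) : MvPolynomial (Fin (m + 1)) ℂ) (C t0) k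
    have hCz : (C (1 + t0 ^ k + a * t0) : MvPolynomial (Fin (m + 1)) ℂ) = 0 := by
      rw [ht2, map_zero]
    rw [map_add, map_add, map_one, map_pow, map_mul] at hCz
    have hsum : (∑ j : Fin (m + 1), (X j : MvPolynomial (Fin (m + 1)) ℂ) ^ (d / w j.succ)) =
        X (Fin.last m) ^ k +
          ∑ j ∈ Finset.univ.erase (Fin.last m), X j * X j ^ (d / w j.succ - 1) := by
      rw [← Finset.add_sum_erase _ _ (Finset.mem_univ (Fin.last m)), hκL]
      congr 1
      apply Finset.sum_congr rfl
      intro j hj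
      rw [← pow_succ']
      congr 1
      have := hκ2 j
      omega
    have hsplit : G = (∑ j ∈ Finset.univ.erase (Fin.last m),
        X j * X j ^ (d / w j.succ - 1)) +
        ((X (Fin.last m) - C t0) * q + C a * (X (Fin.last m) - C t0)) := by
      rw [hG, hsum]
      linear_combination hq + hCz
    rw [hsplit]
    apply Ideal.add_mem
    · apply Ideal.sum_mem
      intro j hj
      exact Ideal.mul_mem_left _ _ (hXmem j (Finset.mem_erase.1 hj).1)
    · exact Ideal.add_mem _ (Ideal.mul_mem_right _ _ hXLmem)
        (Ideal.mul_mem_left _ _ hXLmem)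
  have hpdin : ∀ j : Fin (m + 1), pderiv j G ∈ JJ := by
    intro j
    by_cases hj : j = Fin.last m
    · subst hj
      rw [hpd, if_pos rfl, hκL]
      obtain ⟨q2, hq2⟩ := sub_dvd_pow_sub_pow
        (X (Fin.last m) : MvPolynomial (Fin (m + 1)) ℂ) (C t0) (k - 1)
      have hCz1 : (C (((k : ℕ) : ℂ) * t0 ^ (k - 1) + a) :
          MvPolynomial (Fin (m + 1)) ℂ) = 0 := by rw [ht1, map_zero]
      rw [map_add, map_mul, map_pow] at hCz1
      have heq : C ((k : ℕ) : ℂ) * X (Fin.last m) ^ (k - 1) + C a =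
          C ((k : ℕ) : ℂ) * q2 * (X (Fin.last m) - C t0) := by
        linear_combination C ((k : ℕ) : ℂ) * hq2 + hCz1
      rw [heq]
      exact Ideal.mul_mem_left _ _ hXLmem
    · rw [hpd, if_neg hj, add_zero]
      exact Ideal.mul_mem_left _ _ (hXmem j hj)
  have hJle : J ≤ JJ := by
    rw [hJ]
    apply Ideal.span_le.2
    rintro p hp
    rcases hp with hp | ⟨j, rfl⟩
    · rw [Set.mem_singleton_iff] at hp; subst hp; exact hGin
    · exact hpdin j
  -- JJ ≤ J
  have hGJ : G ∈ J := by
    rw [hJ]; exact Ideal.subset_span (Set.mem_union_left _ rfl)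
  have hpdJ : ∀ j : Fin (m + 1), pderiv j G ∈ J := fun j => by
    rw [hJ]; exact Ideal.subset_span (Set.mem_union_right _ ⟨j, rfl⟩)
  set c2 : ℂ := a - a * ((k : ℕ) : ℂ)⁻¹ with hc2def
  have hc2k : c2 * ((k : ℕ) : ℂ) = a * K1 := by
    rw [hc2def, hK1c]
    field_simp
  have hc2ne : c2 ≠ 0 := by
    intro h
    rw [h, zero_mul] at hc2k
    exact (mul_ne_zero hane cK1) hc2k.symm
  have ht0c2 : t0 = -c2⁻¹ := by
    have h1 : c2 * t0 = -1 := by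
      rw [ht0def, mul_div_assoc', mul_neg, hc2k, neg_div, div_self haK1]
    field_simp at h1 ⊢
    linear_combination h1
  have hterm : ∀ j ∈ Finset.univ.erase (Fin.last m),
      C ((d / w j.succ : ℕ) : ℂ)⁻¹ * X j * pderiv j G = X j ^ (d / w j.succ) := by
    intro j hj
    have hjne : j ≠ Fin.last m := (Finset.mem_erase.1 hj).1
    have cκ : ((d / w j.succ : ℕ) : ℂ) ≠ 0 :=
      Nat.cast_ne_zero.2 (by have := hκ2 j; omega)
    rw [hpd j, if_neg hjne, add_zero]
    calc C ((d / w j.succ : ℕ) : ℂ)⁻¹ * X j *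
          (C ((d / w j.succ : ℕ) : ℂ) * X j ^ (d / w j.succ - 1))
        = (C ((d / w j.succ : ℕ) : ℂ)⁻¹ * C ((d / w j.succ : ℕ) : ℂ)) *
            (X j * X j ^ (d / w j.succ - 1)) := by ring
      _ = X j * X j ^ (d / w j.succ - 1) := by
          rw [← map_mul, inv_mul_cancel₀ cκ, map_one, one_mul]
      _ = X j ^ (d / w j.succ) := by
          rw [← pow_succ']
          congr 1
          have := hκ2 j
          omega
  have hlastterm : C (((k : ℕ) : ℂ))⁻¹ * X (Fin.last m) * pderiv (Fin.last m) G =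
      X (Fin.last m) ^ k + (C a * C (((k : ℕ) : ℂ))⁻¹) * X (Fin.last m) := by
    rw [hpd, if_pos rfl, hκL]
    have hXk : (X (Fin.last m) : MvPolynomial (Fin (m + 1)) ℂ) *
        X (Fin.last m) ^ (k - 1) = X (Fin.last m) ^ k := by
      rw [← pow_succ', hk1k]
    calc C (((k : ℕ) : ℂ))⁻¹ * X (Fin.last m) *
          (C ((k : ℕ) : ℂ) * X (Fin.last m) ^ (k - 1) + C a)
        = (C (((k : ℕ) : ℂ))⁻¹ * C ((k : ℕ) : ℂ)) *
            (X (Fin.last m) * X (Fin.last m) ^ (k - 1)) +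
            (C a * C (((k : ℕ) : ℂ))⁻¹) * X (Fin.last m) := by ring
      _ = X (Fin.last m) * X (Fin.last m) ^ (k - 1) +
            (C a * C (((k : ℕ) : ℂ))⁻¹) * X (Fin.last m) := by
          rw [← map_mul, inv_mul_cancel₀ ck, map_one, one_mul]
      _ = X (Fin.last m) ^ k + (C a * C (((k : ℕ) : ℂ))⁻¹) * X (Fin.last m) := by
          rw [hXk]
  set R : MvPolynomial (Fin (m + 1)) ℂ := G -
      (∑ j ∈ Finset.univ.erase (Fin.last m),
        C ((d / w j.succ : ℕ) : ℂ)⁻¹ * X j * pderiv j G) -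
      C (((k : ℕ) : ℂ))⁻¹ * X (Fin.last m) * pderiv (Fin.last m) G with hRdef
  have hRJ : R ∈ J := by
    rw [hRdef]
    exact Ideal.sub_mem _
      (Ideal.sub_mem _ hGJ
        (Ideal.sum_mem _ (fun j hj => Ideal.mul_mem_left _ _ (hpdJ j))))
      (Ideal.mul_mem_left _ _ (hpdJ (Fin.last m)))
  have hsum2 : (∑ j ∈ Finset.univ.erase (Fin.last m),
      C ((d / w j.succ : ℕ) : ℂ)⁻¹ * X j * pderiv j G) =
      ∑ j ∈ Finset.univ.erase (Fin.last m), X j ^ (d / w j.succ) :=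
    Finset.sum_congr rfl hterm
  have hsum3 : (∑ j : Fin (m + 1), (X j : MvPolynomial (Fin (m + 1)) ℂ) ^ (d / w j.succ)) =
      X (Fin.last m) ^ k +
        ∑ j ∈ Finset.univ.erase (Fin.last m), X j ^ (d / w j.succ) := by
    rw [← Finset.add_sum_erase _ _ (Finset.mem_univ (Fin.last m)), hκL]
  have hR : R = 1 + C c2 * X (Fin.last m) := by
    rw [hRdef, hsum2, hlastterm, hG, hsum3, hc2def, map_sub, map_mul]
    ring
  have hXt0J : (X (Fin.last m) : MvPolynomial (Fin (m + 1)) ℂ) - C t0 ∈ J := by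
    have hCt0 : (C t0 : MvPolynomial (Fin (m + 1)) ℂ) = -C c2⁻¹ := by
      rw [ht0c2, map_neg]
    have hXR : (X (Fin.last m) : MvPolynomial (Fin (m + 1)) ℂ) - C t0 = C c2⁻¹ * R := by
      rw [hR, hCt0, sub_neg_eq_add, mul_add, mul_one, ← mul_assoc,
        ← map_mul, inv_mul_cancel₀ hc2ne, map_one, one_mul]
      exact add_comm _ _
    rw [hXR]
    exact Ideal.mul_mem_left _ _ hRJ
  have hJJle : JJ ≤ J := by
    rw [hJJdef]
    apply Ideal.span_le.2
    rintro p ⟨j, rfl⟩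
    by_cases hj : j = Fin.last m
    · subst hj
      rw [hgen_L]
      exact hXt0J
    · rw [hgen_m j hj]
      have cκ : ((d / w j.succ : ℕ) : ℂ) ≠ 0 :=
        Nat.cast_ne_zero.2 (by have := hκ2 j; omega)
      have heq2 : (X j : MvPolynomial (Fin (m + 1)) ℂ) ^ (d / w j.succ - 1) =
          C ((d / w j.succ : ℕ) : ℂ)⁻¹ * pderiv j G := by
        rw [hpd j, if_neg hj, add_zero, ← mul_assoc, ← map_mul,
          inv_mul_cancel₀ cκ, map_one, one_mul]
      rw [heq2]
      exact Ideal.mul_mem_left _ _ (hpdJ j)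
  have hJeq : J = JJ := le_antisymm hJle hJJle
  -- apply aux_quot
  have hbb : ∀ j : Fin (m + 1),
      1 ≤ (if j = Fin.last m then 1 else d / w j.succ - 1) := by
    intro j
    by_cases hj : j = Fin.last m
    · simp [hj]
    · simp only [hj, if_false]
      have := hκ2 j
      omega
  obtain ⟨hFD, hrank⟩ := aux_quot (m + 1)
    (fun j => if j = Fin.last m then 1 else d / w j.succ - 1) hbb
    (fun j => if j = Fin.last m then t0 else 0)
  have hprod : (∏ j : Fin (m + 1), (if j = Fin.last m then 1 else d / w j.succ - 1)) =
      ∏ j ∈ Finset.univ.filter (fun j : Fin (m + 1) => j ≠ Fin.last m),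
        (d / w j.succ - 1) := by
    rw [Finset.prod_filter]
    apply Finset.prod_congr rfl
    intro j _
    by_cases hj : j = Fin.last m <;> simp [hj]
  constructor
  · rw [hJeq]
    exact hFD
  · rw [hJeq]
    exact hrank.trans hprod

theorem stmt_5 {m : ℕ}
    (w : Fin (m + 2) → ℕ) (hw : ∀ i, 0 < w i)
    (hgcd : Finset.univ.gcd w = 1)
    (d : ℕ) (hd : d = ∑ i, w i) (hdvd : ∀ i, w i ∣ d)
    (hwn : w 0 ∣ w (Fin.last (m + 1)))
    (a : ℂ)
    (G : MvPolynomial (Fin (m + 1)) ℂ)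
    (hG : G = 1 + (∑ j : Fin (m + 1), X j ^ (d / w j.succ)) + C a * X (Fin.last m))
    (J : Ideal (MvPolynomial (Fin (m + 1)) ℂ))
    (hJ : J = Ideal.span ({G} ∪ Set.range (fun j : Fin (m + 1) => pderiv j G))) :
    ((∃ x : Fin (m + 2) → ℂ, x ≠ 0 ∧ ∀ i : Fin (m + 2),
        deriv (fun t : ℂ => Flast d w a (Function.update x i t)) (x i) = 0) ↔
      a ^ (d / w (Fin.last (m + 1))) * (w (Fin.last (m + 1)) : ℂ) *
          ((d - w (Fin.last (m + 1)) : ℕ) : ℂ) ^ (d / w (Fin.last (m + 1)) - 1) +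
        (-1 : ℂ) ^ (d / w (Fin.last (m + 1)) - 1) *
          (d : ℂ) ^ (d / w (Fin.last (m + 1))) = 0) ∧
    (a ^ (d / w (Fin.last (m + 1))) * (w (Fin.last (m + 1)) : ℂ) *
          ((d - w (Fin.last (m + 1)) : ℕ) : ℂ) ^ (d / w (Fin.last (m + 1)) - 1) +
        (-1 : ℂ) ^ (d / w (Fin.last (m + 1)) - 1) *
          (d : ℂ) ^ (d / w (Fin.last (m + 1))) = 0 →
      (∃! x : Fin (m + 2) → ℂ, x 0 = 1 ∧ ∀ i : Fin (m + 2),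
          deriv (fun t : ℂ => Flast d w a (Function.update x i t)) (x i) = 0) ∧
      FiniteDimensional ℂ (MvPolynomial (Fin (m + 1)) ℂ ⧸ J) ∧
      Module.finrank ℂ (MvPolynomial (Fin (m + 1)) ℂ ⧸ J) =
        ∏ j ∈ Finset.univ.filter (fun j : Fin (m + 1) => j ≠ Fin.last m),
          (d / w j.succ - 1)) := by
  obtain ⟨hiff, huniq⟩ := crit_main w hw d hd hdvd hwn a
  refine ⟨hiff, fun hdisc => ⟨huniq hdisc, ?_, ?_⟩⟩
  · exact (tjurina w hw d hd hdvd a G hG J hJ hdisc).1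
  · exact (tjurina w hw d hd hdvd a G hG J hJ hdisc).2
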